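/- arXiv:2001.01348 — 3 statements merged into one kernel-verified Lean document; each statement's English description precedes it below -/
import Mathlib

section
/- There is no nonempty open interval contained in (1/2, 1) on which the function τ♭ is continuous, and there is no nonempty open interval contained in (1/2, 1) on which the function τ♯ is continuous. -/
open MeasureTheory Filter Set

/-- The tent map: distance to the nearest integer. -/
noncomputable def phi (t : ℝ) : ℝ := ⨅ z : ℤ, |t - (z : ℝ)|

/-- A function in the Takagi class, for coefficient sequence `c`. -/
noncomputable def takagiF (c : ℕ → ℝ) (t : ℝ) : ℝ := ∑' m : ℕ, c m * phi (2 ^ m * t)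

/-- `T(ρ) = Σ 2^{-(n+2)} (1 - ρ n)`. -/
noncomputable def Trho (ρ : ℕ → ℝ) : ℝ := ∑' n : ℕ, (1 - ρ n) / 2 ^ (n + 2)

/-- A `{-1,+1}`-valued sequence. -/
def IsSign (ρ : ℕ → ℝ) : Prop := ∀ n, ρ n = 1 ∨ ρ n = -1

/-- `ρ` is a Rademacher expansion of `t`. -/
def IsRademacherExp (ρ : ℕ → ℝ) (t : ℝ) : Prop := IsSign ρ ∧ Trho ρ = t

/-- The step condition for coefficients `c`. -/
def StepCond (c : ℕ → ℝ) (ρ : ℕ → ℝ) : Prop :=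
  ∀ n : ℕ, 1 ≤ n → ρ n * ∑ m ∈ Finset.range n, 2 ^ m * c m * ρ m ≤ 0

noncomputable def sharpAux (c : ℕ → ℝ) : ℕ → ℝ × ℝ
  | 0 => (1, c 0)
  | n + 1 =>
    let S := (sharpAux c n).2
    let r : ℝ := if S ≤ 0 then 1 else -1
    (r, S + 2 ^ (n + 1) * c (n + 1) * r)

/-- The sequence `ρ♯` for coefficients `c`. -/
noncomputable def rhoSharp (c : ℕ → ℝ) (n : ℕ) : ℝ := (sharpAux c n).1

noncomputable def flatAux (c : ℕ → ℝ) : ℕ → ℝ × ℝ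
  | 0 => (1, c 0)
  | n + 1 =>
    let S := (flatAux c n).2
    let r : ℝ := if S < 0 then 1 else -1
    (r, S + 2 ^ (n + 1) * c (n + 1) * r)

/-- The sequence `ρ♭` for coefficients `c`. -/
noncomputable def rhoFlat (c : ℕ → ℝ) (n : ℕ) : ℝ := (flatAux c n).1

/-- The Takagi–Landsberg function with parameter `α`. -/
noncomputable def fTL (α : ℝ) (t : ℝ) : ℝ := ∑' m : ℕ, α ^ m / 2 ^ m * phi (2 ^ m * t)

noncomputable def sharpAuxTL (α : ℝ) : ℕ → ℝ × ℝ
  | 0 => (1, 1)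
  | n + 1 =>
    let S := (sharpAuxTL α n).2
    let r : ℝ := if S ≤ 0 then 1 else -1
    (r, S + α ^ (n + 1) * r)

/-- The sequence `ρ♯(α)` for the Takagi–Landsberg function. -/
noncomputable def rhoSharpTL (α : ℝ) (n : ℕ) : ℝ := (sharpAuxTL α n).1

noncomputable def flatAuxTL (α : ℝ) : ℕ → ℝ × ℝ
  | 0 => (1, 1)
  | n + 1 =>
    let S := (flatAuxTL α n).2
    let r : ℝ := if S < 0 then 1 else -1
    (r, S + α ^ (n + 1) * r)

/-- The sequence `ρ♭(α)` for the Takagi–Landsberg function. -/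
noncomputable def rhoFlatTL (α : ℝ) (n : ℕ) : ℝ := (flatAuxTL α n).1

/-- `τ♯(α) = T(ρ♯(α))`. -/
noncomputable def tauSharp (α : ℝ) : ℝ := Trho (rhoSharpTL α)

/-- `τ♭(α) = T(ρ♭(α))`. -/
noncomputable def tauFlat (α : ℝ) : ℝ := Trho (rhoFlatTL α)

/-- The Littlewood polynomial `p_{2n}(x) = 1 - x - x² - ⋯ - x^{2n}`. -/
noncomputable def p2n (n : ℕ) (x : ℝ) : ℝ := 1 - ∑ m ∈ Finset.Icc 1 (2 * n), x ^ m

/-! ### Auxiliary development for the proof -/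

noncomputable def Ssum (α : ℝ) (r : ℕ → ℝ) (n : ℕ) : ℝ := ∑ m ∈ Finset.range (n + 1), α ^ m * r m

lemma Ssum_succ (α : ℝ) (r : ℕ → ℝ) (n : ℕ) :
    Ssum α r (n + 1) = Ssum α r n + α ^ (n + 1) * r (n + 1) := by
  simp [Ssum, Finset.sum_range_succ]

lemma Ssum_zero (α : ℝ) (r : ℕ → ℝ) : Ssum α r 0 = r 0 := by simp [Ssum]

/-- L1 : |S_n| ≤ α^n. -/
lemma ssum_bound {α : ℝ} (hα : 1/2 ≤ α) {r : ℕ → ℝ}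
    (hr0 : r 0 = 1) (hsign : ∀ n, r n = 1 ∨ r n = -1)
    (hpos : ∀ n, 0 < Ssum α r n → r (n + 1) = -1)
    (hneg : ∀ n, Ssum α r n < 0 → r (n + 1) = 1) :
    ∀ n, |Ssum α r n| ≤ α ^ n := by
  have hα0 : (0:ℝ) ≤ α := by linarith
  intro n
  induction n with
  | zero => simp [Ssum_zero, hr0]
  | succ n ih =>
    have hpow : (0:ℝ) ≤ α ^ n := pow_nonneg hα0 n
    have hpows : α ^ (n+1) = α ^ n * α := pow_succ α n
    rw [abs_le] at ih ⊢
    rw [Ssum_succ]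
    rcases lt_trichotomy (Ssum α r n) 0 with h | h | h
    · rw [hneg n h]
      constructor <;> nlinarith [ih.1, ih.2]
    · rcases hsign (n+1) with h1 | h1 <;> rw [h1] <;> rw [h] <;> constructor <;> nlinarith
    · rw [hpos n h]
      constructor <;> nlinarith [ih.1, ih.2]

/-- L2 : within any window of uniform length K there is a `+1`. -/
lemma tail_plus {c : ℝ} (hc1 : 1/2 < c) (hc2 : c < 1) :
    ∃ K : ℕ, ∀ (α : ℝ), c ≤ α → α < 1 → ∀ (r : ℕ → ℝ),
      r 0 = 1 → (∀ n, r n = 1 ∨ r n = -1) →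
      (∀ n, 0 < Ssum α r n → r (n + 1) = -1) →
      (∀ n, Ssum α r n < 0 → r (n + 1) = 1) →
      ∀ n, ∃ j, n < j ∧ j ≤ n + K ∧ r j = 1 := by
  have hcpos : (0:ℝ) < c := by linarith
  obtain ⟨m, hm⟩ : ∃ m : ℕ, c ^ m < 2 - 1/c := by
    apply exists_pow_lt_of_lt_one _ hc2
    rw [sub_pos, div_lt_iff₀ hcpos]; linarith
  refine ⟨m + 1, fun α hcα hα1 r hr0 hsign hpos hneg n => ?_⟩
  have hα0 : (0:ℝ) ≤ α := by linarith
  by_cases hex : ∃ j, n < j ∧ j ≤ n + m ∧ r j = 1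
  · obtain ⟨j, h1, h2, h3⟩ := hex
    exact ⟨j, h1, by omega, h3⟩
  push_neg at hex
  have hall : ∀ j, n < j → j ≤ n + m → r j = -1 := by
    intro j hj1 hj2
    rcases hsign j with h | h
    · exact absurd h (hex j hj1 hj2)
    · exact h
  -- compute S_{n+m}
  have hIco : Ssum α r (n + m) = Ssum α r n - ∑ i ∈ Finset.Ico (n+1) (n+m+1), α ^ i := by
    have h1 : Ssum α r (n+m) - Ssum α r n = ∑ i ∈ Finset.Ico (n+1) (n+m+1), α ^ i * r i := by
      rw [Ssum, Ssum, Finset.sum_Ico_eq_sub _ (by omega : n + 1 ≤ n + m + 1)]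
    have h2 : ∑ i ∈ Finset.Ico (n+1) (n+m+1), α ^ i * r i
        = ∑ i ∈ Finset.Ico (n+1) (n+m+1), -(α ^ i) := by
      apply Finset.sum_congr rfl
      intro i hi
      rw [Finset.mem_Ico] at hi
      rw [hall i (by omega) (by omega)]
      ring
    rw [h2, Finset.sum_neg_distrib] at h1
    linarith
  have hgeom : ∑ i ∈ Finset.Ico (n+1) (n+m+1), α ^ i = α ^ (n+1) * ∑ i ∈ Finset.range m, α ^ i := by
    rw [Finset.sum_Ico_eq_sum_range]
    have : n + m + 1 - (n + 1) = m := by omega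
    rw [this]
    simp only [pow_add]
    rw [← Finset.mul_sum]
  -- 1 < α * geom sum
  have hkey : 1 < α * ∑ i ∈ Finset.range m, α ^ i := by
    have hmono : c * ∑ i ∈ Finset.range m, c ^ i ≤ α * ∑ i ∈ Finset.range m, α ^ i := by
      have hs : ∑ i ∈ Finset.range m, c ^ i ≤ ∑ i ∈ Finset.range m, α ^ i :=
        Finset.sum_le_sum fun i _ => pow_le_pow_left₀ hcpos.le hcα i
      exact mul_le_mul hcα hs (Finset.sum_nonneg fun i _ => pow_nonneg hcpos.le i) hα0
    have hcgeom : 1 < c * ∑ i ∈ Finset.range m, c ^ i := by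
      rw [geom_sum_eq (ne_of_lt hc2)]
      rw [mul_div_assoc']
      rw [lt_div_iff_of_neg (by linarith : c - 1 < 0)]
      have h2 := mul_lt_mul_of_pos_left hm hcpos
      have h1c : c * (1/c) = 1 := by field_simp
      nlinarith
    linarith
  have hSn : Ssum α r n ≤ α ^ n := (abs_le.mp (ssum_bound (le_of_lt (lt_of_lt_of_le hc1 hcα)) hr0 hsign hpos hneg n)).2
  have hneg' : Ssum α r (n + m) < 0 := by
    rw [hIco, hgeom]
    have hpown : (0:ℝ) < α ^ n := pow_pos (by linarith) n
    have : α ^ (n+1) * ∑ i ∈ Finset.range m, α ^ i = α ^ n * (α * ∑ i ∈ Finset.range m, α ^ i) := by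
      rw [pow_succ]; ring
    rw [this]
    nlinarith
  exact ⟨n + m + 1, by omega, by omega, hneg (n + m) hneg'⟩

lemma geomG_summable : Summable (fun k : ℕ => ((1:ℝ)/2) ^ (k + 1)) := by
  have h := (summable_geometric_of_lt_one (by norm_num : (0:ℝ) ≤ 1/2) (by norm_num)).mul_right (1/2)
  exact h.congr fun k => (pow_succ _ _).symm

lemma geomG_tsum : (∑' k : ℕ, ((1:ℝ)/2) ^ (k + 1)) = 1 := by
  have h : ∀ k : ℕ, ((1:ℝ)/2) ^ (k+1) = ((1:ℝ)/2) ^ k * (1/2) := fun k => pow_succ _ _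
  rw [tsum_congr h, tsum_mul_right, tsum_geometric_of_lt_one (by norm_num) (by norm_num)]
  norm_num

lemma geomG_finsum (n : ℕ) : ∑ k ∈ Finset.range n, ((1:ℝ)/2) ^ (k + 1) = 1 - ((1:ℝ)/2) ^ n := by
  induction n with
  | zero => simp
  | succ n ih => rw [Finset.sum_range_succ, ih]; ring

lemma two_div_pow (k : ℕ) : (2:ℝ) / 2 ^ (k + 2) = ((1:ℝ)/2) ^ (k + 1) := by
  rw [div_pow, one_pow, div_eq_div_iff (by positivity) (by positivity), pow_succ]
  ring

lemma trho_term_bound {ρ : ℕ → ℝ} (hρ : ∀ k, ρ k = 1 ∨ ρ k = -1) (k : ℕ) :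
    |(1 - ρ k) / 2 ^ (k + 2)| ≤ ((1:ℝ)/2) ^ (k + 1) := by
  rcases hρ k with h | h <;> rw [h]
  · simp only [sub_self, zero_div, abs_zero]
    positivity
  · rw [show (1:ℝ) - (-1) = 2 by ring, two_div_pow k, abs_of_nonneg (by positivity)]

lemma trho_summable {ρ : ℕ → ℝ} (hρ : ∀ k, ρ k = 1 ∨ ρ k = -1) :
    Summable (fun k : ℕ => (1 - ρ k) / 2 ^ (k + 2)) :=
  Summable.of_norm_bounded geomG_summable (trho_term_bound hρ)

/-- L3 : the jump estimate. -/
lemma jump {ρ σ : ℕ → ℝ} (hρ : ∀ k, ρ k = 1 ∨ ρ k = -1) (hσ : ∀ k, σ k = 1 ∨ σ k = -1)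
    {n j : ℕ} (hagree : ∀ m, m < n → ρ m = σ m) (hρn : ρ n = 1) (hσn : σ n = -1)
    (hnj : n < j) (hρj : ρ j = 1) :
    ((1:ℝ)/2) ^ (j + 1) ≤ Trho σ - Trho ρ := by
  have hbdσ : ∀ k, -1 ≤ σ k ∧ σ k ≤ 1 := by
    intro k; rcases hσ k with h | h <;> rw [h] <;> norm_num
  have hbdρ : ∀ k, -1 ≤ ρ k ∧ ρ k ≤ 1 := by
    intro k; rcases hρ k with h | h <;> rw [h] <;> norm_num
  set d : ℕ → ℝ := fun k => (ρ k - σ k) / 2 ^ (k + 2) with hd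
  have hsumd : Summable d := by
    have h := (trho_summable hσ).sub (trho_summable hρ)
    apply h.congr
    intro k
    simp only [hd]
    ring
  have htd : Trho σ - Trho ρ = ∑' k, d k := by
    rw [Trho, Trho, ← (trho_summable hσ).tsum_sub (trho_summable hρ)]
    exact tsum_congr fun k => by simp only [hd]; ring
  have hupos : ∀ k, 0 ≤ d k + ((1:ℝ)/2) ^ (k + 1) := by
    intro k
    have h2 : (-2:ℝ)/2^(k+2) ≤ d k := by
      simp only [hd]
      gcongr
      linarith [(hbdρ k).1, (hbdσ k).2]
    have h3 : (-2:ℝ)/2^(k+2) = -(((1:ℝ)/2)^(k+1)) := by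
      rw [neg_div, two_div_pow]
    linarith
  set u : ℕ → ℝ := fun k => d k + ((1:ℝ)/2) ^ (k + 1) with hu
  have hsumu : Summable u := hsumd.add geomG_summable
  have htsumu : ∑' k, u k = (∑' k, d k) + 1 := by
    rw [hsumd.tsum_add geomG_summable, geomG_tsum]
  have hjF : j ∉ Finset.range (n+1) := by simp; omega
  have hrange : ∑ k ∈ Finset.range (n+1), u k = 1 := by
    rw [Finset.sum_range_succ]
    have h1 : ∑ k ∈ Finset.range n, u k = ∑ k ∈ Finset.range n, ((1:ℝ)/2)^(k+1) := by
      apply Finset.sum_congr rfl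
      intro k hk
      rw [Finset.mem_range] at hk
      simp only [hu, hd, hagree k hk]
      ring
    have h2 : u n = 2 * ((1:ℝ)/2)^(n+1) := by
      simp only [hu, hd, hρn, hσn]
      rw [show (1:ℝ) - (-1) = 2 by ring, two_div_pow]
      ring
    rw [h1, geomG_finsum, h2]
    have h3 : 2 * ((1:ℝ)/2)^(n+1) = ((1:ℝ)/2)^n := by rw [pow_succ]; ring
    linarith
  have huj : ((1:ℝ)/2)^(j+1) ≤ u j := by
    have hdj : 0 ≤ d j := by
      simp only [hd, hρj, hσn]
      apply div_nonneg _ (by positivity)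
      linarith [(hbdσ j).2]
    simp only [hu]
    linarith
  have hle : ∑ k ∈ insert j (Finset.range (n+1)), u k ≤ ∑' k, u k :=
    hsumu.sum_le_tsum _ (fun k _ => hupos k)
  rw [Finset.sum_insert hjF, hrange, htsumu] at hle
  rw [htd]
  have h9 : u j ≤ ∑' k, d k := by linarith
  exact le_trans huj h9

lemma boundary_aux {g : ℝ → ℝ} (hg : Continuous g) {u v : ℝ} (huv : u < v)
    (hu : g u < 0) (hv : 0 ≤ g v) :
    ∃ y ∈ Icc u v, 0 ≤ g y ∧ ∀ δ > 0, ∃ x ∈ Icc u v, g x < 0 ∧ |x - y| < δ := by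
  set Z := {x : ℝ | x ∈ Icc u v ∧ g x < 0} with hZ
  have hZne : Z.Nonempty := ⟨u, ⟨le_refl u, le_of_lt huv⟩, hu⟩
  have hZbdd : BddAbove Z := ⟨v, fun x hx => hx.1.2⟩
  set y := sSup Z with hy
  have hyZ : ∀ x ∈ Z, x ≤ y := fun x hx => le_csSup hZbdd hx
  have hymem : y ∈ Icc u v := by
    constructor
    · exact le_trans (le_refl u) (hyZ u ⟨⟨le_refl u, le_of_lt huv⟩, hu⟩)
    · exact csSup_le hZne fun x hx => hx.1.2
  refine ⟨y, hymem, ?_, ?_⟩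
  · by_contra hgy
    push_neg at hgy
    have hyv : y ≠ v := fun h => absurd (h ▸ hgy) (not_lt.mpr hv)
    have hyv' : y < v := lt_of_le_of_ne hymem.2 hyv
    have hopen : IsOpen {x : ℝ | g x < 0} := isOpen_lt hg continuous_const
    obtain ⟨ε, hε, hball⟩ := Metric.isOpen_iff.mp hopen y hgy
    set x := min (y + ε/2) v with hx
    have hxy : y < x := lt_min (by linarith) hyv'
    have hxZ : x ∈ Z := by
      refine ⟨⟨le_trans hymem.1 (le_of_lt hxy), min_le_right _ _⟩, ?_⟩
      apply hball
      rw [Metric.mem_ball, Real.dist_eq, abs_lt]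
      constructor
      · have : x ≤ y + ε/2 := min_le_left _ _
        linarith
      · have : x ≤ y + ε/2 := min_le_left _ _
        linarith
    linarith [hyZ x hxZ]
  · intro δ hδ
    obtain ⟨x, hxZ, hxgt⟩ := exists_lt_of_lt_csSup hZne (by linarith : y - δ < y)
    refine ⟨x, hxZ.1, hxZ.2, ?_⟩
    rw [abs_lt]
    constructor
    · linarith
    · linarith [hyZ x hxZ, hδ]

lemma boundary {g : ℝ → ℝ} (hg : Continuous g) {u v : ℝ}
    (hu : g u < 0) (hv : 0 ≤ g v) :
    ∃ y ∈ Icc (min u v) (max u v), 0 ≤ g y ∧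
      ∀ δ > 0, ∃ x ∈ Icc (min u v) (max u v), g x < 0 ∧ |x - y| < δ := by
  rcases lt_trichotomy u v with h | h | h
  · rw [min_eq_left (le_of_lt h), max_eq_right (le_of_lt h)]
    exact boundary_aux hg h hu hv
  · subst h; linarith
  · rw [min_eq_right (le_of_lt h), max_eq_left (le_of_lt h)]
    have hg' : Continuous fun x => g (u + v - x) :=
      hg.comp (by continuity)
    have h1 : (fun x => g (u + v - x)) v < 0 := by simpa using hu
    have h2 : 0 ≤ (fun x => g (u + v - x)) u := by simpa using hv
    obtain ⟨y', hy'mem, hy'pos, hy'app⟩ := boundary_aux hg' h h1 h2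
    refine ⟨u + v - y', ⟨by linarith [hy'mem.2], by linarith [hy'mem.1]⟩, hy'pos, ?_⟩
    intro δ hδ
    obtain ⟨x', hx'mem, hx'neg, hx'close⟩ := hy'app δ hδ
    refine ⟨u + v - x', ⟨by linarith [hx'mem.2], by linarith [hx'mem.1]⟩, hx'neg, ?_⟩
    calc |u + v - x' - (u + v - y')| = |y' - x'| := by ring_nf
      _ < δ := by rw [abs_sub_comm]; exact hx'close

/-- A power-series with ±1 coefficients cannot vanish on a subinterval of (1/2,1). -/
lemma no_vanish (ε : ℕ → ℝ) (hsign : ∀ n, ε n = 1 ∨ ε n = -1) (hε0 : ε 0 = 1)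
    {a b : ℝ} (hab : a < b) (hsub : Ioo a b ⊆ Ioo (1/2 : ℝ) 1)
    (hzero : ∀ α ∈ Ioo a b, (∑' m : ℕ, ε m • α ^ m) = 0) : False := by
  have habs : ∀ n, |ε n| = 1 := by
    intro n; rcases hsign n with h | h <;> rw [h] <;> norm_num
  set p := FormalMultilinearSeries.ofScalars ℝ ε with hp
  have hrad : (1 : ENNReal) ≤ p.radius := by
    apply FormalMultilinearSeries.le_radius_of_bound _ 1 (r := 1)
    intro n
    rw [FormalMultilinearSeries.ofScalars_norm]
    simp [Real.norm_eq_abs, habs n]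
  have hradpos : (0 : ENNReal) < p.radius := lt_of_lt_of_le one_pos hrad
  have hball : HasFPowerSeriesOnBall p.sum p 0 p.radius := p.hasFPowerSeriesOnBall hradpos
  have hAn : AnalyticOnNhd ℝ p.sum (Metric.ball (0:ℝ) 1) := by
    intro x hx
    apply hball.analyticAt_of_mem
    rw [EMetric.mem_ball, edist_zero_right]
    calc (‖x‖₊ : ENNReal) < 1 := by
          rw [Metric.mem_ball, dist_zero_right] at hx
          exact_mod_cast hx
      _ ≤ p.radius := hrad
  -- p.sum = 0 near midpoint
  set z₀ := (a + b) / 2 with hz₀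
  have hz₀mem : z₀ ∈ Ioo a b := ⟨by linarith, by linarith⟩
  have hsum_eq : ∀ x : ℝ, p.sum x = ∑' m : ℕ, ε m • x ^ m := fun x =>
    FormalMultilinearSeries.ofScalars_sum_eq ε x
  have hev : p.sum =ᶠ[nhds z₀] 0 := by
    filter_upwards [Ioo_mem_nhds hz₀mem.1 hz₀mem.2] with x hx
    rw [hsum_eq x, hzero x hx]; rfl
  have hIsub : Ioo a b ⊆ Metric.ball (0:ℝ) 1 := by
    intro x hx
    have := hsub hx
    rw [Metric.mem_ball, dist_zero_right, Real.norm_eq_abs, abs_lt]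
    constructor <;> [linarith [this.1]; exact this.2]
  have hEq : EqOn p.sum 0 (Metric.ball (0:ℝ) 1) :=
    hAn.eqOn_zero_of_preconnected_of_eventuallyEq_zero
      (convex_ball _ _).isPreconnected (hIsub hz₀mem) hev
  have h0 : p.sum 0 = 0 := hEq (by simp)
  rw [hsum_eq 0] at h0
  have : (∑' m : ℕ, ε m • (0:ℝ) ^ m) = ε 0 := by
    rw [tsum_eq_single 0]
    · simp
    · intro m hm
      simp [zero_pow hm]
  rw [this, hε0] at h0
  norm_num at h0

lemma not_all_const (rho : ℝ → ℕ → ℝ) {a b : ℝ} (hab : a < b)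
    (hsub : Ioo a b ⊆ Ioo (1/2 : ℝ) 1)
    (h0 : ∀ α, rho α 0 = 1)
    (hsign : ∀ α n, rho α n = 1 ∨ rho α n = -1)
    (hbound : ∀ α ∈ Ioo a b, ∀ n, |Ssum α (rho α) n| ≤ α ^ n) :
    ∃ n, ¬ ∀ α ∈ Ioo a b, ∀ β ∈ Ioo a b, rho α n = rho β n := by
  by_contra hcon
  push_neg at hcon
  have hα₀mem : (a + b)/2 ∈ Ioo a b := ⟨by linarith, by linarith⟩
  set α₀ := (a + b)/2 with hα₀
  set ε := rho α₀ with hε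
  apply no_vanish ε (hsign α₀) (h0 α₀) hab hsub
  intro α hα
  have hα1 : 1/2 < α := (hsub hα).1
  have hα2 : α < 1 := (hsub hα).2
  have hα0' : (0:ℝ) ≤ α := by linarith
  have hcc : ∀ m, rho α m = ε m := fun m => hcon m α hα α₀ hα₀mem
  have hserm : Summable (fun m : ℕ => ε m • α ^ m) := by
    apply Summable.of_norm_bounded (summable_geometric_of_lt_one hα0' hα2)
    intro m
    have habs : |ε m| = 1 := by
      rcases hsign α₀ m with h | h <;> rw [hε, h] <;> norm_num
    rw [norm_smul, Real.norm_eq_abs, Real.norm_eq_abs, habs, one_mul, abs_pow,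
      abs_of_nonneg hα0']
  have hP : ∀ n : ℕ, ∑ m ∈ Finset.range (n+1), ε m • α ^ m = Ssum α (rho α) n := by
    intro n
    apply Finset.sum_congr rfl
    intro m _
    rw [hcc m, smul_eq_mul, mul_comm]
  have htend1 : Tendsto (fun n : ℕ => ∑ m ∈ Finset.range (n+1), ε m • α ^ m) atTop
      (nhds (∑' m : ℕ, ε m • α ^ m)) := by
    have := hserm.hasSum.tendsto_sum_nat
    exact this.comp (tendsto_add_atTop_nat 1)
  have htend0 : Tendsto (fun n : ℕ => ∑ m ∈ Finset.range (n+1), ε m • α ^ m) atTop (nhds 0) := by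
    apply squeeze_zero_norm (fun n => ?_) (tendsto_pow_atTop_nhds_zero_of_lt_one hα0' hα2)
    rw [hP n]
    exact hbound α hα n
  exact tendsto_nhds_unique htend1 htend0

/-- The master discontinuity lemma. -/
lemma master (rho : ℝ → ℕ → ℝ)
    (h0 : ∀ α, rho α 0 = 1)
    (hsign : ∀ α n, rho α n = 1 ∨ rho α n = -1)
    (hpos : ∀ α n, 0 < Ssum α (rho α) n → rho α (n + 1) = -1)
    (hneg : ∀ α n, Ssum α (rho α) n < 0 → rho α (n + 1) = 1)
    (htie : (∀ α n, 0 ≤ Ssum α (rho α) n → rho α (n + 1) = -1) ∨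
            (∀ α n, Ssum α (rho α) n ≤ 0 → rho α (n + 1) = 1)) :
    ¬ ∃ a b : ℝ, a < b ∧ Ioo a b ⊆ Ioo (1/2 : ℝ) 1 ∧
      ContinuousOn (fun α => Trho (rho α)) (Ioo a b) := by
  classical
  rintro ⟨a, b, hab, hsub, hcont⟩
  have hbound : ∀ α ∈ Ioo a b, ∀ k, |Ssum α (rho α) k| ≤ α ^ k := fun α hα =>
    ssum_bound (le_of_lt (hsub hα).1) (h0 α) (hsign α) (hpos α) (hneg α)
  have hex : ∃ k, ¬ ∀ α ∈ Ioo a b, ∀ β ∈ Ioo a b, rho α k = rho β k :=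
    not_all_const rho hab hsub h0 hsign hbound
  set n := Nat.find hex with hn
  have hnc := Nat.find_spec hex
  rw [← hn] at hnc
  have hmin : ∀ m, m < n → ∀ α ∈ Ioo a b, ∀ β ∈ Ioo a b, rho α m = rho β m := by
    intro m hm
    have := Nat.find_min hex hm
    rwa [not_not] at this
  have hn1 : n ≠ 0 := by
    intro h
    apply hnc
    intro α _ β _
    rw [h, h0 α, h0 β]
  obtain ⟨N, hN⟩ : ∃ N, n = N + 1 := ⟨n - 1, by omega⟩
  have hα₀mem : (a + b)/2 ∈ Ioo a b := ⟨by linarith, by linarith⟩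
  set α₀ := (a + b)/2
  set ε := rho α₀ with hε
  set q : ℝ → ℝ := fun x => ∑ m ∈ Finset.range (N + 1), x ^ m * ε m with hq
  have hqcont : Continuous q := by
    apply continuous_finset_sum
    intro m _
    exact (continuous_pow m).mul continuous_const
  have hqeq : ∀ α ∈ Ioo a b, Ssum α (rho α) N = q α := by
    intro α hα
    apply Finset.sum_congr rfl
    intro m hm
    rw [Finset.mem_range] at hm
    rw [hmin m (by omega) α hα α₀ hα₀mem]
  -- get the two witnesses
  push_neg at hnc
  obtain ⟨x₁, hx₁, x₂, hx₂, hx12⟩ := hnc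
  have hwit : ∃ α₁ ∈ Ioo a b, ∃ α₂ ∈ Ioo a b, rho α₁ n = 1 ∧ rho α₂ n = -1 := by
    rcases hsign x₁ n with h1 | h1 <;> rcases hsign x₂ n with h2 | h2
    · rw [h1, h2] at hx12; exact absurd rfl hx12
    · exact ⟨x₁, hx₁, x₂, hx₂, h1, h2⟩
    · exact ⟨x₂, hx₂, x₁, hx₁, h2, h1⟩
    · rw [h1, h2] at hx12; exact absurd rfl hx12
  obtain ⟨α₁, hα₁, α₂, hα₂, hr1, hr2⟩ := hwit
  -- tail constant
  have hone_ne : (1 : ℝ) ≠ -1 := by norm_num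
  rcases htie with tie | tie
  · -- FLAT case
    have hq1 : q α₁ < 0 := by
      by_contra h
      push_neg at h
      have := tie α₁ N (by rw [hqeq α₁ hα₁]; exact h)
      rw [← hN] at this
      rw [hr1] at this
      exact hone_ne this
    have hq2 : 0 ≤ q α₂ := by
      by_contra h
      push_neg at h
      have := hneg α₂ N (by rw [hqeq α₂ hα₂]; exact h)
      rw [← hN] at this
      rw [hr2] at this
      exact hone_ne this.symm
    obtain ⟨y, hymem, hqy, happ⟩ := boundary hqcont hq1 hq2
    have hminmax1 : a < min α₁ α₂ := lt_min hα₁.1 hα₂.1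
    have hminmax2 : max α₁ α₂ < b := max_lt hα₁.2 hα₂.2
    have hIccsub : Icc (min α₁ α₂) (max α₁ α₂) ⊆ Ioo a b := fun z hz =>
      ⟨lt_of_lt_of_le hminmax1 hz.1, lt_of_le_of_lt hz.2 hminmax2⟩
    have hyI : y ∈ Ioo a b := hIccsub hymem
    set c := (1/2 + min α₁ α₂)/2 with hc
    have hc1 : 1/2 < c := by
      have := (hsub (hIccsub ⟨le_refl _, min_le_max⟩)).1
      simp only [hc]; linarith
    have hcmin : c < min α₁ α₂ := by
      have := (hsub (hIccsub ⟨le_refl _, min_le_max⟩)).1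
      simp only [hc]; linarith
    have hc2 : c < 1 := by
      have h1 := (hsub (hIccsub ⟨le_refl _, min_le_max⟩)).2
      linarith
    obtain ⟨K, hK⟩ := tail_plus hc1 hc2
    set ε₀ := ((1:ℝ)/2) ^ (n + K + 1) with hε₀
    have hε₀pos : 0 < ε₀ := by positivity
    have hcy : ContinuousAt (fun α => Trho (rho α)) y :=
      hcont.continuousAt (Ioo_mem_nhds hyI.1 hyI.2)
    obtain ⟨δ, hδpos, hδ⟩ := Metric.continuousAt_iff.mp hcy ε₀ hε₀pos
    obtain ⟨x, hxmem, hqx, hxy⟩ := happ δ hδpos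
    have hxI : x ∈ Ioo a b := hIccsub hxmem
    have hρx : rho x n = 1 := by
      rw [hN]
      exact hneg x N (by rw [hqeq x hxI]; exact hqx)
    have hρy : rho y n = -1 := by
      rw [hN]
      exact tie y N (by rw [hqeq y hyI]; exact hqy)
    obtain ⟨j, hj1, hj2, hj3⟩ := hK x (le_of_lt (lt_of_lt_of_le hcmin hxmem.1)) (hsub hxI).2
      (rho x) (h0 x) (hsign x) (hpos x) (hneg x) n
    have hjump := jump (hsign x) (hsign y)
      (fun m hm => hmin m hm x hxI y hyI) hρx hρy hj1 hj3
    have hmono : ε₀ ≤ ((1:ℝ)/2) ^ (j + 1) := by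
      apply pow_le_pow_of_le_one (by norm_num) (by norm_num)
      omega
    have hdist := hδ (by rwa [Real.dist_eq])
    rw [Real.dist_eq] at hdist
    have : Trho (rho y) - Trho (rho x) ≤ |Trho (rho x) - Trho (rho y)| := by
      rw [abs_sub_comm]
      exact le_abs_self _
    linarith
  · -- SHARP case
    have hq2 : 0 < q α₂ := by
      by_contra h
      push_neg at h
      have := tie α₂ N (by rw [hqeq α₂ hα₂]; exact h)
      rw [← hN] at this
      rw [hr2] at this
      exact hone_ne this.symm
    have hq1 : q α₁ ≤ 0 := by
      by_contra h
      push_neg at h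
      have := hpos α₁ N (by rw [hqeq α₁ hα₁]; exact h)
      rw [← hN] at this
      rw [hr1] at this
      exact hone_ne this
    have hnq2 : (fun z => -(q z)) α₂ < 0 := by simpa using hq2
    have hnq1 : 0 ≤ (fun z => -(q z)) α₁ := by simpa using hq1
    obtain ⟨y, hymem, hqy, happ⟩ := boundary (hqcont.neg) hnq2 hnq1
    have hminmax1 : a < min α₂ α₁ := lt_min hα₂.1 hα₁.1
    have hminmax2 : max α₂ α₁ < b := max_lt hα₂.2 hα₁.2
    have hIccsub : Icc (min α₂ α₁) (max α₂ α₁) ⊆ Ioo a b := fun z hz =>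
      ⟨lt_of_lt_of_le hminmax1 hz.1, lt_of_le_of_lt hz.2 hminmax2⟩
    have hyI : y ∈ Ioo a b := hIccsub hymem
    set c := (1/2 + min α₂ α₁)/2 with hc
    have hc1 : 1/2 < c := by
      have := (hsub (hIccsub ⟨le_refl _, min_le_max⟩)).1
      simp only [hc]; linarith
    have hcmin : c < min α₂ α₁ := by
      have := (hsub (hIccsub ⟨le_refl _, min_le_max⟩)).1
      simp only [hc]; linarith
    have hc2 : c < 1 := by
      have h1 := (hsub (hIccsub ⟨le_refl _, min_le_max⟩)).2
      linarith
    obtain ⟨K, hK⟩ := tail_plus hc1 hc2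
    set ε₀ := ((1:ℝ)/2) ^ (n + K + 1) with hε₀
    have hε₀pos : 0 < ε₀ := by positivity
    have hcy : ContinuousAt (fun α => Trho (rho α)) y :=
      hcont.continuousAt (Ioo_mem_nhds hyI.1 hyI.2)
    obtain ⟨δ, hδpos, hδ⟩ := Metric.continuousAt_iff.mp hcy ε₀ hε₀pos
    obtain ⟨x, hxmem, hqx, hxy⟩ := happ δ hδpos
    have hxI : x ∈ Ioo a b := hIccsub hxmem
    have hqx' : 0 < q x := by simpa using hqx
    have hqy' : q y ≤ 0 := by simpa using hqy
    have hρx : rho x n = -1 := by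
      rw [hN]
      exact hpos x N (by rw [hqeq x hxI]; exact hqx')
    have hρy : rho y n = 1 := by
      rw [hN]
      exact tie y N (by rw [hqeq y hyI]; exact hqy')
    obtain ⟨j, hj1, hj2, hj3⟩ := hK y (le_of_lt (lt_of_lt_of_le hcmin hymem.1)) (hsub hyI).2
      (rho y) (h0 y) (hsign y) (hpos y) (hneg y) n
    have hjump := jump (hsign y) (hsign x)
      (fun m hm => hmin m hm y hyI x hxI) hρy hρx hj1 hj3
    have hmono : ε₀ ≤ ((1:ℝ)/2) ^ (j + 1) := by
      apply pow_le_pow_of_le_one (by norm_num) (by norm_num)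
      omega
    have hdist := hδ (by rwa [Real.dist_eq])
    rw [Real.dist_eq] at hdist
    have : Trho (rho x) - Trho (rho y) ≤ |Trho (rho x) - Trho (rho y)| := le_abs_self _
    linarith

/-! ### Bridge to the concrete definitions -/

lemma flatAuxTL_fst_succ (α : ℝ) (n : ℕ) :
    (flatAuxTL α (n + 1)).1 = if (flatAuxTL α n).2 < 0 then (1:ℝ) else -1 := by
  rw [flatAuxTL]

lemma flatAuxTL_snd_succ (α : ℝ) (n : ℕ) :
    (flatAuxTL α (n + 1)).2 = (flatAuxTL α n).2 + α ^ (n+1) * (flatAuxTL α (n+1)).1 := by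
  rw [flatAuxTL]

lemma sharpAuxTL_fst_succ (α : ℝ) (n : ℕ) :
    (sharpAuxTL α (n + 1)).1 = if (sharpAuxTL α n).2 ≤ 0 then (1:ℝ) else -1 := by
  rw [sharpAuxTL]

lemma sharpAuxTL_snd_succ (α : ℝ) (n : ℕ) :
    (sharpAuxTL α (n + 1)).2 = (sharpAuxTL α n).2 + α ^ (n+1) * (sharpAuxTL α (n+1)).1 := by
  rw [sharpAuxTL]

lemma rhoFlatTL_zero (α : ℝ) : rhoFlatTL α 0 = 1 := by
  rw [rhoFlatTL, flatAuxTL]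

lemma rhoSharpTL_zero (α : ℝ) : rhoSharpTL α 0 = 1 := by
  rw [rhoSharpTL, sharpAuxTL]

lemma flatAuxTL_snd (α : ℝ) : ∀ n, (flatAuxTL α n).2 = Ssum α (rhoFlatTL α) n := by
  intro n
  induction n with
  | zero => rw [Ssum_zero, rhoFlatTL_zero, flatAuxTL]
  | succ n ih => rw [flatAuxTL_snd_succ, Ssum_succ, ih, rhoFlatTL]

lemma sharpAuxTL_snd (α : ℝ) : ∀ n, (sharpAuxTL α n).2 = Ssum α (rhoSharpTL α) n := by
  intro n
  induction n with
  | zero => rw [Ssum_zero, rhoSharpTL_zero, sharpAuxTL]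
  | succ n ih => rw [sharpAuxTL_snd_succ, Ssum_succ, ih, rhoSharpTL]

lemma rhoFlatTL_succ (α : ℝ) (n : ℕ) :
    rhoFlatTL α (n + 1) = if Ssum α (rhoFlatTL α) n < 0 then (1:ℝ) else -1 := by
  rw [rhoFlatTL, flatAuxTL_fst_succ, flatAuxTL_snd]

lemma rhoSharpTL_succ (α : ℝ) (n : ℕ) :
    rhoSharpTL α (n + 1) = if Ssum α (rhoSharpTL α) n ≤ 0 then (1:ℝ) else -1 := by
  rw [rhoSharpTL, sharpAuxTL_fst_succ, sharpAuxTL_snd]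

lemma rhoFlatTL_sign (α : ℝ) (n : ℕ) : rhoFlatTL α n = 1 ∨ rhoFlatTL α n = -1 := by
  cases n with
  | zero => left; exact rhoFlatTL_zero α
  | succ n =>
    rw [rhoFlatTL_succ]
    split
    · left; rfl
    · right; rfl

lemma rhoSharpTL_sign (α : ℝ) (n : ℕ) : rhoSharpTL α n = 1 ∨ rhoSharpTL α n = -1 := by
  cases n with
  | zero => left; exact rhoSharpTL_zero α
  | succ n =>
    rw [rhoSharpTL_succ]
    split
    · left; rfl
    · right; rfl


theorem tau_nowhere_continuous_on_intervals :
    (¬∃ a b : ℝ, a < b ∧ Set.Ioo a b ⊆ Set.Ioo (1 / 2 : ℝ) 1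
        ∧ ContinuousOn tauFlat (Set.Ioo a b))
    ∧ (¬∃ a b : ℝ, a < b ∧ Set.Ioo a b ⊆ Set.Ioo (1 / 2 : ℝ) 1
        ∧ ContinuousOn tauSharp (Set.Ioo a b)) := by
  constructor
  · intro h
    apply master rhoFlatTL (fun α => rhoFlatTL_zero α)
      (fun α n => rhoFlatTL_sign α n)
      (fun α n hS => by rw [rhoFlatTL_succ, if_neg (not_lt.mpr (le_of_lt hS))])
      (fun α n hS => by rw [rhoFlatTL_succ, if_pos hS])
      (Or.inl (fun α n hS => by rw [rhoFlatTL_succ, if_neg (not_lt.mpr hS)]))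
    obtain ⟨a, b, hab, hsub, hcont⟩ := h
    exact ⟨a, b, hab, hsub, hcont⟩
  · intro h
    apply master rhoSharpTL (fun α => rhoSharpTL_zero α)
      (fun α n => rhoSharpTL_sign α n)
      (fun α n hS => by rw [rhoSharpTL_succ, if_neg (not_le.mpr hS)])
      (fun α n hS => by rw [rhoSharpTL_succ, if_pos (le_of_lt hS)])
      (Or.inr (fun α n hS => by rw [rhoSharpTL_succ, if_pos hS]))
    obtain ⟨a, b, hab, hsub, hcont⟩ := h
    exact ⟨a, b, hab, hsub, hcont⟩
end

section
/- For every α ∈ (1, 2), the Takagi–Landsberg function f_α has exactly two global maximizers on [0,1], located at t = 1/3 and t = 2/3, and its maximum value is 1/(3(1 − α/2)). -/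
open MeasureTheory Filter Set

section Aux

private lemma phi_bdd (t : ℝ) : BddBelow (Set.range fun z : ℤ => |t - (z : ℝ)|) :=
  ⟨0, by rintro x ⟨z, rfl⟩; positivity⟩

lemma phi_le_abs (t : ℝ) (z : ℤ) : phi t ≤ |t - (z : ℝ)| := ciInf_le (phi_bdd t) z

lemma phi_nonneg (t : ℝ) : 0 ≤ phi t := le_ciInf fun _ => abs_nonneg _

lemma phi_eq_round (t : ℝ) : phi t = |t - (round t : ℝ)| := by
  refine le_antisymm (phi_le_abs t _) (le_ciInf fun z => ?_)
  rcases eq_or_ne z (round t) with rfl | h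
  · exact le_refl _
  · have h1 : (1 : ℝ) ≤ |((z - round t : ℤ) : ℝ)| := by
      exact_mod_cast Int.one_le_abs (sub_ne_zero.mpr h)
    have h1' : (1 : ℝ) ≤ |(z : ℝ) - (round t : ℝ)| := by push_cast at h1; exact h1
    have h2 := abs_sub_round t
    have h3 : |(z : ℝ) - (round t : ℝ)| ≤ |(z : ℝ) - t| + |t - (round t : ℝ)| :=
      abs_sub_le _ _ _
    have h4 : |(z : ℝ) - t| = |t - (z : ℝ)| := abs_sub_comm _ _
    linarith

lemma phi_le_half (t : ℝ) : phi t ≤ 1 / 2 := by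
  rw [phi_eq_round]; exact abs_sub_round t

lemma phi_add_int (t : ℝ) (k : ℤ) : phi (t + (k : ℝ)) = phi t := by
  rw [phi_eq_round, phi_eq_round, round_add_intCast]
  push_cast
  ring_nf

lemma phi_neg (t : ℝ) : phi (-t) = phi t := by
  have key : ∀ s : ℝ, phi (-s) ≤ phi s := by
    intro s
    rw [phi_eq_round s]
    have := phi_le_abs (-s) (-(round s))
    have e : |(-s) - ((-(round s) : ℤ) : ℝ)| = |s - (round s : ℝ)| := by
      push_cast
      rw [← abs_neg]
      ring_nf
    rw [e] at this
    exact this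
  refine le_antisymm (key t) ?_
  have := key (-t)
  rwa [neg_neg] at this

lemma phi_eq_self {t : ℝ} (h0 : 0 ≤ t) (h2 : t ≤ 1 / 2) : phi t = t := by
  rcases lt_or_eq_of_le h2 with h | h
  · have hr : round t = 0 := round_eq_zero_iff.mpr ⟨by linarith, h⟩
    rw [phi_eq_round, hr]
    simpa using abs_of_nonneg h0
  · subst h
    rw [phi_eq_round]
    have : round (1/2 : ℝ) = 1 := by norm_num [round_eq]
    rw [this]
    norm_num

lemma phi_third : phi (1 / 3 : ℝ) = 1 / 3 := phi_eq_self (by norm_num) (by norm_num)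

lemma phi_two_thirds : phi (2 / 3 : ℝ) = 1 / 3 := by
  have e : (2 / 3 : ℝ) = -(1 / 3) + ((1 : ℤ) : ℝ) := by norm_num
  rw [e, phi_add_int, phi_neg, phi_third]

lemma phi_lipschitz : LipschitzWith 1 phi := by
  apply LipschitzWith.of_dist_le_mul
  intro x y
  have key : ∀ a b : ℝ, phi a - phi b ≤ |a - b| := by
    intro a b
    have h1 : phi a ≤ |a - (round b : ℝ)| := phi_le_abs a (round b)
    have h2 : |a - (round b : ℝ)| ≤ |a - b| + |b - (round b : ℝ)| := abs_sub_le _ _ _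
    rw [phi_eq_round b]
    linarith
  rw [Real.dist_eq, Real.dist_eq, NNReal.coe_one, one_mul, abs_sub_le_iff]
  exact ⟨key x y, (abs_sub_comm x y) ▸ key y x⟩

lemma phi_continuous : Continuous phi := phi_lipschitz.continuous

end Aux

section Aux2

variable {α : ℝ}

lemma fTL_summable (h1 : 0 < α) (h2 : α < 2) (t : ℝ) :
    Summable fun m : ℕ => α ^ m / 2 ^ m * phi (2 ^ m * t) := by
  have hc0 : (0 : ℝ) ≤ α / 2 := by linarith
  have hc1 : α / 2 < 1 := by linarith
  refine Summable.of_nonneg_of_le (fun m => ?_) (fun m => ?_)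
    ((summable_geometric_of_lt_one hc0 hc1).mul_right (1 / 2))
  · have := phi_nonneg (2 ^ m * t)
    positivity
  · rw [← div_pow]
    exact mul_le_mul_of_nonneg_left (phi_le_half _) (by positivity)

lemma fTL_rec (h1 : 0 < α) (h2 : α < 2) (t : ℝ) :
    fTL α t = phi t + α / 2 * fTL α (2 * t) := by
  unfold fTL
  rw [(fTL_summable h1 h2 t).tsum_eq_zero_add]
  have h00 : α ^ 0 / 2 ^ 0 * phi (2 ^ 0 * t) = phi t := by norm_num
  rw [h00]
  congr 1
  have key : ∀ n : ℕ, α ^ (n + 1) / 2 ^ (n + 1) * phi (2 ^ (n + 1) * t)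
      = α / 2 * (α ^ n / 2 ^ n * phi (2 ^ n * (2 * t))) := by
    intro n
    have e : (2 : ℝ) ^ (n + 1) * t = 2 ^ n * (2 * t) := by ring
    rw [e, pow_succ, pow_succ]
    ring
  rw [tsum_congr key, tsum_mul_left]

lemma fTL_reflect (t : ℝ) : fTL α (1 - t) = fTL α t := by
  apply tsum_congr
  intro m
  congr 1
  have e : (2 : ℝ) ^ m * (1 - t) = -(2 ^ m * t) + (((2 : ℤ) ^ m : ℤ) : ℝ) := by
    push_cast; ring
  rw [e, phi_add_int, phi_neg]

lemma phi_pow_third : ∀ m : ℕ, phi ((2 : ℝ) ^ m * (1 / 3)) = 1 / 3 := by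
  have key : ∀ m : ℕ, ∃ k : ℕ, 2 ^ m = 3 * k + 1 ∨ 2 ^ m = 3 * k + 2 := by
    intro m
    induction m with
    | zero => exact ⟨0, Or.inl rfl⟩
    | succ n ih =>
      obtain ⟨k, h | h⟩ := ih
      · exact ⟨2 * k, Or.inr (by rw [pow_succ]; omega)⟩
      · exact ⟨2 * k + 1, Or.inl (by rw [pow_succ]; omega)⟩
  intro m
  obtain ⟨k, h | h⟩ := key m
  · have h' : ((2 ^ m : ℕ) : ℝ) = ((3 * k + 1 : ℕ) : ℝ) := by exact_mod_cast h
    push_cast at h'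
    have e : (2 : ℝ) ^ m * (1 / 3) = 1 / 3 + ((k : ℤ) : ℝ) := by
      push_cast; rw [h']; ring
    rw [e, phi_add_int, phi_third]
  · have h' : ((2 ^ m : ℕ) : ℝ) = ((3 * k + 2 : ℕ) : ℝ) := by exact_mod_cast h
    push_cast at h'
    have e : (2 : ℝ) ^ m * (1 / 3) = 2 / 3 + ((k : ℤ) : ℝ) := by
      push_cast; rw [h']; ring
    rw [e, phi_add_int, phi_two_thirds]

lemma fTL_third (h1 : 0 < α) (h2 : α < 2) : fTL α (1 / 3) = 1 / (3 * (1 - α / 2)) := by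
  unfold fTL
  have e : ∀ m : ℕ, α ^ m / 2 ^ m * phi (2 ^ m * (1 / 3)) = 1 / 3 * (α / 2) ^ m := by
    intro m
    rw [phi_pow_third m, div_pow]
    ring
  rw [tsum_congr e, tsum_mul_left,
    tsum_geometric_of_lt_one (by linarith) (by linarith)]
  have hne : (1 : ℝ) - α / 2 ≠ 0 := by intro h; linarith [sub_eq_zero.mp h]
  field_simp

lemma fTL_continuous (h1 : 0 < α) (h2 : α < 2) : Continuous (fTL α) := by
  have hc0 : (0 : ℝ) ≤ α / 2 := by linarith
  have hc1 : α / 2 < 1 := by linarith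
  apply continuous_tsum (u := fun m : ℕ => (α / 2) ^ m * (1 / 2))
  · intro m
    exact continuous_const.mul (phi_continuous.comp (continuous_const.mul continuous_id))
  · exact (summable_geometric_of_lt_one hc0 hc1).mul_right _
  · intro m t
    rw [Real.norm_eq_abs, abs_mul, abs_of_nonneg (phi_nonneg _),
      abs_of_nonneg (by positivity : (0:ℝ) ≤ α ^ m / 2 ^ m), ← div_pow]
    exact mul_le_mul_of_nonneg_left (phi_le_half _) (by positivity)

end Aux2

section Main

variable {α : ℝ}

lemma fTL_step1 (h1 : 1 < α) (h2 : α < 2) {t : ℝ} (ht0 : 0 ≤ t) (ht2 : t ≤ 1 / 2)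
    {B : ℝ} (hB : ∀ s ∈ Set.Icc (0 : ℝ) 1, fTL α s ≤ B) :
    fTL α t ≤ t + α / 2 * B := by
  rw [fTL_rec (by linarith) h2, phi_eq_self ht0 ht2]
  have h3 : fTL α (2 * t) ≤ B := hB _ ⟨by linarith, by linarith⟩
  nlinarith

lemma fTL_step2 (h1 : 1 < α) (h2 : α < 2) {t : ℝ} (ht0 : 1 / 3 ≤ t) (ht2 : t ≤ 1 / 2)
    {B : ℝ} (hB : ∀ s ∈ Set.Icc (0 : ℝ) 1, fTL α s ≤ B) :
    fTL α t ≤ t + α / 2 * (1 - 2 * t) + (α / 2) ^ 2 * B := by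
  have h0 : (0:ℝ) < α := by linarith
  have e1 : fTL α t = t + α / 2 * fTL α (2 * t) := by
    rw [fTL_rec h0 h2, phi_eq_self (by linarith) ht2]
  have e2 : fTL α (2 * t) = fTL α (1 - 2 * t) := (fTL_reflect _).symm
  have e3 : fTL α (1 - 2 * t) = (1 - 2 * t) + α / 2 * fTL α (2 * (1 - 2 * t)) := by
    rw [fTL_rec h0 h2, phi_eq_self (by linarith) (by linarith)]
  have e4 : fTL α (2 * (1 - 2 * t)) ≤ B := hB _ ⟨by linarith, by linarith⟩
  rw [e1, e2, e3]
  nlinarith [mul_le_mul_of_nonneg_left e4 (by positivity : (0:ℝ) ≤ (α/2)^2)]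

lemma fTL_eq_third (h1 : 1 < α) (h2 : α < 2) {t : ℝ} (ht0 : 0 ≤ t) (ht2 : t ≤ 1 / 2)
    (hV : fTL α t = 1 / (3 * (1 - α / 2)))
    (hB : ∀ s ∈ Set.Icc (0 : ℝ) 1, fTL α s ≤ 1 / (3 * (1 - α / 2))) : t = 1 / 3 := by
  set V : ℝ := 1 / (3 * (1 - α / 2)) with hVdef
  have hc : (0:ℝ) < 1 - α / 2 := by linarith
  have hVpos : 0 < V := by rw [hVdef]; positivity
  have hne : (1 : ℝ) - α / 2 ≠ 0 := ne_of_gt hc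
  have hid1 : (1 - α / 2) * V = 1 / 3 := by
    rw [hVdef, mul_one_div, mul_comm (3:ℝ) (1 - α / 2), ← div_div, div_self hne]
  have hid2 : (1 - (α / 2) ^ 2) * V = (1 + α / 2) / 3 :=
    calc (1 - (α / 2) ^ 2) * V = (1 + α / 2) * ((1 - α / 2) * V) := by ring
      _ = (1 + α / 2) * (1 / 3) := by rw [hid1]
      _ = (1 + α / 2) / 3 := by ring
  have i1 : V ≤ t + α / 2 * V := by
    have := fTL_step1 h1 h2 ht0 ht2 hB
    rwa [hV] at this
  have ht3 : 1 / 3 ≤ t := by nlinarith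
  have i2 : V ≤ t + α / 2 * (1 - 2 * t) + (α / 2) ^ 2 * V := by
    have := fTL_step2 h1 h2 ht3 ht2 hB
    rwa [hV] at this
  have hle : t ≤ 1 / 3 := by nlinarith [mul_pos (by linarith : (0:ℝ) < α - 1) (by linarith : (0:ℝ) < α - 1)]
  linarith

lemma fTL_bound (h1 : 1 < α) (h2 : α < 2) :
    ∀ s ∈ Set.Icc (0 : ℝ) 1, fTL α s ≤ 1 / (3 * (1 - α / 2)) := by
  have h0 : (0:ℝ) < α := by linarith
  obtain ⟨t₀, ht₀, hmax⟩ := isCompact_Icc.exists_isMaxOn (α := ℝ)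
    (Set.nonempty_Icc.mpr (by norm_num : (0:ℝ) ≤ 1)) (fTL_continuous h0 h2).continuousOn
  have hmax' : ∀ s ∈ Set.Icc (0 : ℝ) 1, fTL α s ≤ fTL α t₀ := fun s hs => hmax hs
  set M : ℝ := fTL α t₀ with hM
  set V : ℝ := 1 / (3 * (1 - α / 2)) with hVdef
  have hc : (0:ℝ) < 1 - α / 2 := by linarith
  have hVpos : 0 < V := by rw [hVdef]; positivity
  have hMV : V ≤ M := by
    have := hmax' (1 / 3) ⟨by norm_num, by norm_num⟩
    rwa [fTL_third h0 h2] at this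
  -- reduce to [0, 1/2]
  obtain ⟨t₁, h10, h12, hMt⟩ : ∃ t₁ : ℝ, 0 ≤ t₁ ∧ t₁ ≤ 1 / 2 ∧ fTL α t₁ = M := by
    rcases le_or_gt t₀ (1 / 2) with h | h
    · exact ⟨t₀, ht₀.1, h, rfl⟩
    · exact ⟨1 - t₀, by linarith [ht₀.2], by linarith, fTL_reflect t₀⟩
  have hne : (1 : ℝ) - α / 2 ≠ 0 := ne_of_gt hc
  have hid1 : (1 - α / 2) * V = 1 / 3 := by
    rw [hVdef, mul_one_div, mul_comm (3:ℝ) (1 - α / 2), ← div_div, div_self hne]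
  have hid2 : (1 - (α / 2) ^ 2) * V = (1 + α / 2) / 3 :=
    calc (1 - (α / 2) ^ 2) * V = (1 + α / 2) * ((1 - α / 2) * V) := by ring
      _ = (1 + α / 2) * (1 / 3) := by rw [hid1]
      _ = (1 + α / 2) / 3 := by ring
  have i1 : M ≤ t₁ + α / 2 * M := by
    have := fTL_step1 h1 h2 h10 h12 hmax'
    rwa [hMt] at this
  have ht3 : 1 / 3 ≤ t₁ := by
    nlinarith [mul_nonneg hc.le (sub_nonneg.mpr hMV)]
  have i2 : M ≤ t₁ + α / 2 * (1 - 2 * t₁) + (α / 2) ^ 2 * M := by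
    have := fTL_step2 h1 h2 ht3 h12 hmax'
    rwa [hMt] at this
  have hMle : M ≤ V := by
    nlinarith [mul_nonneg (by linarith : (0:ℝ) ≤ α - 1) (by linarith : (0:ℝ) ≤ t₁ - 1/3),
      sq_nonneg (α/2), mul_pos h0 h0]
  intro s hs
  exact (hmax' s hs).trans hMle

end Main

theorem takagi_landsberg_maximizers_alpha_gt_one
    (α : ℝ) (hα : α ∈ Set.Ioo (1 : ℝ) 2) :
    {t : ℝ | t ∈ Set.Icc (0 : ℝ) 1 ∧ ∀ s ∈ Set.Icc (0 : ℝ) 1, fTL α s ≤ fTL α t}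
      = {1 / 3, 2 / 3}
    ∧ IsGreatest (fTL α '' Set.Icc (0 : ℝ) 1) (1 / (3 * (1 - α / 2))) := by
  obtain ⟨h1, h2⟩ := hα
  have h0 : (0:ℝ) < α := by linarith
  set V : ℝ := 1 / (3 * (1 - α / 2)) with hVdef
  have hB : ∀ s ∈ Set.Icc (0 : ℝ) 1, fTL α s ≤ V := fTL_bound h1 h2
  have hthird : fTL α (1 / 3) = V := fTL_third h0 h2
  have htwothird : fTL α (2 / 3) = V := by
    have e : (2 / 3 : ℝ) = 1 - 1 / 3 := by norm_num
    rw [e, fTL_reflect, hthird]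
  have hmem13 : (1 / 3 : ℝ) ∈ Set.Icc (0 : ℝ) 1 := ⟨by norm_num, by norm_num⟩
  have hmem23 : (2 / 3 : ℝ) ∈ Set.Icc (0 : ℝ) 1 := ⟨by norm_num, by norm_num⟩
  constructor
  · ext t
    simp only [Set.mem_setOf_eq, Set.mem_insert_iff, Set.mem_singleton_iff]
    constructor
    · rintro ⟨htI, hmax⟩
      have hVt : fTL α t = V := le_antisymm (hB t htI) (hthird ▸ hmax (1 / 3) hmem13)
      rcases le_or_gt t (1 / 2) with h | h
      · exact Or.inl (fTL_eq_third h1 h2 htI.1 h hVt hB)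
      · right
        have h10 : 0 ≤ 1 - t := by linarith [htI.2]
        have h12 : 1 - t ≤ 1 / 2 := by linarith
        have hVt' : fTL α (1 - t) = V := by rw [fTL_reflect, hVt]
        have := fTL_eq_third h1 h2 h10 h12 hVt' hB
        linarith
    · rintro (rfl | rfl)
      · exact ⟨hmem13, fun s hs => hthird ▸ hB s hs⟩
      · exact ⟨hmem23, fun s hs => htwothird ▸ hB s hs⟩
  · exact ⟨⟨1 / 3, hmem13, hthird⟩, by
      rintro y ⟨s, hs, rfl⟩
      exact hB s hs⟩
end

section
/- The closure (in ℝ) of the set of all real roots of all Littlewood polynomials is equal to [−2, −1/2] ∪ [1/2, 2]. -/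
open MeasureTheory Filter Set

namespace LittlewoodAux

/-- The set of real roots of Littlewood polynomials. -/
def LSet : Set ℝ := {x : ℝ | ∃ P : Polynomial ℝ,
    (∀ i : ℕ, i ≤ P.natDegree → P.coeff i = 1 ∨ P.coeff i = -1)
    ∧ Polynomial.eval x P = 0}

/-- Greedy polynomial sequence used for the density argument. -/
noncomputable def gp (a : ℝ) : ℕ → Polynomial ℝ
  | 0 => Polynomial.C 1
  | n+1 => gp a n +
      Polynomial.C (if 0 < (gp a n).eval a then -1 else 1) * Polynomial.X ^ (n+1)

lemma sign_ne (a : ℝ) (n : ℕ) : (if 0 < (gp a n).eval a then (-1:ℝ) else 1) ≠ 0 := by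
  split_ifs <;> norm_num

lemma natDegree_gp (a : ℝ) : ∀ n, (gp a n).natDegree = n
  | 0 => by simp [gp]
  | n+1 => by
      rw [gp, Polynomial.natDegree_add_eq_right_of_natDegree_lt] <;>
        rw [Polynomial.natDegree_C_mul_X_pow _ _ (sign_ne a n)]
      rw [natDegree_gp a n]
      exact Nat.lt_succ_self n

/-- The greedy sign coefficients. -/
noncomputable def eps (a : ℝ) (k : ℕ) : ℝ := (gp a k).coeff k

lemma coeff_gp (a : ℝ) : ∀ n k, k ≤ n → (gp a n).coeff k = eps a k
  | 0, 0, _ => rfl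
  | n+1, k, hk => by
      rcases Nat.lt_or_ge k (n+1) with h | h
      · rw [gp, Polynomial.coeff_add, Polynomial.coeff_C_mul_X_pow,
          if_neg (by omega), add_zero, coeff_gp a n k (by omega)]
      · have hkn : k = n+1 := le_antisymm hk h
        subst hkn; rfl

lemma eps_zero (a : ℝ) : eps a 0 = 1 := by simp [eps, gp]

lemma eps_succ (a : ℝ) (n : ℕ) :
    eps a (n+1) = if 0 < (gp a n).eval a then -1 else 1 := by
  have h : (gp a n).coeff (n+1) = 0 :=
    Polynomial.coeff_eq_zero_of_natDegree_lt (by rw [natDegree_gp]; omega)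
  rw [eps, gp, Polynomial.coeff_add, h, zero_add, Polynomial.coeff_C_mul_X_pow,
    if_pos rfl]

lemma eps_sign (a : ℝ) (n : ℕ) : eps a n = 1 ∨ eps a n = -1 := by
  cases n with
  | zero => left; exact eps_zero a
  | succ n => rw [eps_succ]; split_ifs <;> simp

lemma abs_eps (a : ℝ) (n : ℕ) : |eps a n| = 1 := by
  rcases eps_sign a n with h | h <;> rw [h] <;> norm_num

lemma gp_littlewood (a : ℝ) (n : ℕ) :
    ∀ i : ℕ, i ≤ (gp a n).natDegree → (gp a n).coeff i = 1 ∨ (gp a n).coeff i = -1 := by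
  intro i hi
  rw [natDegree_gp] at hi
  rw [coeff_gp a n i hi]
  exact eps_sign a i

lemma eval_gp (a x : ℝ) :
    ∀ n, (gp a n).eval x = ∑ k ∈ Finset.range (n+1), eps a k * x ^ k
  | 0 => by simp [gp, eps_zero]
  | n+1 => by
      rw [gp, Polynomial.eval_add, Polynomial.eval_mul, Polynomial.eval_C,
        Polynomial.eval_pow, Polynomial.eval_X, Finset.sum_range_succ,
        eval_gp a x n, eps_succ]

lemma gp_bound (a b : ℝ) (ha : 1/2 < a) (hab : a ≤ b) (hb : b < 1)
    (H : ∀ x ∈ Set.Icc a b, x ∉ LSet) :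
    ∀ n, ∀ x ∈ Set.Icc a b, |(gp a n).eval x| ≤ x ^ (n+1) / (1-x) := by
  intro n
  induction n with
  | zero =>
    intro x hx
    have hax : 1/2 < x := lt_of_lt_of_le ha hx.1
    have hx1 : x < 1 := lt_of_le_of_lt hx.2 hb
    have h1x : (0:ℝ) < 1 - x := by linarith
    simp only [gp, Polynomial.eval_C]
    rw [abs_one, le_div_iff₀ h1x, pow_one]
    linarith
  | succ n ih =>
    intro x hx
    have hax : 1/2 < x := lt_of_lt_of_le ha hx.1
    have hx1 : x < 1 := lt_of_le_of_lt hx.2 hb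
    have h1x : (0:ℝ) < 1 - x := by linarith
    have hxpos : (0:ℝ) < x := by linarith
    have hne : ∀ y ∈ Set.Icc a b, (gp a n).eval y ≠ 0 := by
      intro y hy hz
      exact H y hy ⟨gp a n, gp_littlewood a n, hz⟩
    have hcont : ContinuousOn (fun y => (gp a n).eval y) (Set.Icc a x) :=
      (gp a n).continuous.continuousOn
    have hsign : 0 < (gp a n).eval a ↔ 0 < (gp a n).eval x := by
      constructor
      · intro hpa
        by_contra hc
        have hpx : (gp a n).eval x < 0 :=
          lt_of_le_of_ne (not_lt.mp hc) (hne x hx)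
        have h0 : (0:ℝ) ∈ Set.Icc ((gp a n).eval x) ((gp a n).eval a) :=
          ⟨le_of_lt hpx, le_of_lt hpa⟩
        obtain ⟨c, hc1, hc2⟩ := intermediate_value_Icc' hx.1 hcont h0
        exact hne c ⟨hc1.1, le_trans hc1.2 hx.2⟩ hc2
      · intro hpx
        by_contra hc
        have hpa : (gp a n).eval a < 0 :=
          lt_of_le_of_ne (not_lt.mp hc) (hne a ⟨le_refl a, hab⟩)
        have h0 : (0:ℝ) ∈ Set.Icc ((gp a n).eval a) ((gp a n).eval x) :=
          ⟨le_of_lt hpa, le_of_lt hpx⟩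
        obtain ⟨c, hc1, hc2⟩ := intermediate_value_Icc hx.1 hcont h0
        exact hne c ⟨hc1.1, le_trans hc1.2 hx.2⟩ hc2
    have ihx := ih x hx
    rw [abs_le] at ihx
    have hupp' : (gp a n).eval x * (1-x) ≤ x^(n+1) := (le_div_iff₀ h1x).mp ihx.2
    have hlow' : -(x^(n+1)) ≤ (gp a n).eval x * (1-x) := by
      have h := (le_div_iff₀ h1x).mp (by linarith [ihx.1] :
        -((gp a n).eval x) ≤ x^(n+1)/(1-x))
      linarith
    have hpow : (0:ℝ) < x^(n+1) := pow_pos hxpos _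
    have hps : x^(n+1+1) = x^(n+1) * x := pow_succ x (n+1)
    have key : x^(n+1) ≤ x^(n+1+1)/(1-x) := by
      rw [le_div_iff₀ h1x]; nlinarith
    rw [gp, Polynomial.eval_add, Polynomial.eval_mul, Polynomial.eval_C,
      Polynomial.eval_pow, Polynomial.eval_X]
    by_cases hpa : 0 < (gp a n).eval a
    · rw [if_pos hpa]
      have hpx : 0 < (gp a n).eval x := hsign.mp hpa
      rw [abs_le]
      constructor
      · linarith [key]
      · rw [le_div_iff₀ h1x]
        have expand : ((gp a n).eval x + (-1) * x^(n+1)) * (1-x)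
            = (gp a n).eval x * (1-x) - x^(n+1) + x^(n+1) * x := by ring
        rw [expand]; linarith [hupp', hps.symm.le, hps.le]
    · rw [if_neg hpa]
      have hpa' : (gp a n).eval a < 0 :=
        lt_of_le_of_ne (not_lt.mp hpa) (hne a ⟨le_refl a, hab⟩)
      have hpx : (gp a n).eval x < 0 := by
        by_contra hc
        exact hpa (hsign.mpr (lt_of_le_of_ne (not_lt.mp hc) (hne x hx).symm))
      rw [abs_le]
      constructor
      · have hrw : -(x^(n+1+1)/(1-x)) = (-(x^(n+1+1)))/(1-x) := by ring
        rw [hrw, div_le_iff₀ h1x]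
        have expand : ((gp a n).eval x + 1 * x^(n+1)) * (1-x)
            = (gp a n).eval x * (1-x) + x^(n+1) - x^(n+1) * x := by ring
        rw [expand]; linarith [hlow', hps.le]
      · linarith [key]

lemma exists_root (a b : ℝ) (ha : 1/2 < a) (hab : a < b) (hb : b < 1) :
    ∃ x, x ∈ Set.Icc a b ∧ x ∈ LSet := by
  by_contra hcon
  push_neg at hcon
  set c : ℕ → ℝ := eps a with hc
  have hrad : (1 : ENNReal) ≤ (FormalMultilinearSeries.ofScalars ℝ c).radius := by
    rw [← ENNReal.coe_one]
    apply FormalMultilinearSeries.le_radius_of_bound _ 1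
    intro n
    rw [FormalMultilinearSeries.ofScalars_norm]
    simp [Real.norm_eq_abs, hc, abs_eps]
  have hball := (FormalMultilinearSeries.ofScalars ℝ c).hasFPowerSeriesOnBall
    (lt_of_lt_of_le zero_lt_one hrad)
  have hsub : Metric.ball (0:ℝ) 1 ⊆
      EMetric.ball (0:ℝ) (FormalMultilinearSeries.ofScalars ℝ c).radius := by
    intro x hx
    rw [Metric.mem_ball, dist_zero_right] at hx
    show edist x 0 < _
    calc edist x 0 = ENNReal.ofReal (dist x 0) := edist_dist _ _
      _ < 1 := by
          rw [ENNReal.ofReal_lt_one, dist_zero_right]; exact hx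
      _ ≤ _ := hrad
  have han : AnalyticOnNhd ℝ (FormalMultilinearSeries.ofScalars ℝ c).sum
      (Metric.ball (0:ℝ) 1) := hball.analyticOnNhd.mono hsub
  have hzero : ∀ x ∈ Set.Icc a b,
      (FormalMultilinearSeries.ofScalars ℝ c).sum x = 0 := by
    intro x hx
    have hax : 1/2 < x := lt_of_lt_of_le ha hx.1
    have hx1 : x < 1 := lt_of_le_of_lt hx.2 hb
    have hxpos : (0:ℝ) < x := by linarith
    have h1x : (0:ℝ) < 1 - x := by linarith
    have hxa : |x| < 1 := by rw [abs_of_pos hxpos]; exact hx1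
    have hsumm : Summable (fun k => c k * x ^ k) := by
      apply Summable.of_norm_bounded
        (summable_geometric_of_lt_one (abs_nonneg x) hxa)
      intro k
      rw [norm_mul, Real.norm_eq_abs, Real.norm_eq_abs, hc, abs_eps, one_mul,
        abs_pow]
    have hsum_eq : (FormalMultilinearSeries.ofScalars ℝ c).sum x
        = ∑' k, c k * x ^ k := by
      unfold FormalMultilinearSeries.sum
      exact tsum_congr fun n => by
        rw [FormalMultilinearSeries.ofScalars_apply_eq, smul_eq_mul]
    rw [hsum_eq]
    have key : ∀ n : ℕ, |∑' k, c k * x ^ k| ≤ 2 * (x ^ (n+1) / (1-x)) := by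
      intro n
      have hdecomp := hsumm.sum_add_tsum_nat_add (n+1)
      have hpart : |∑ i ∈ Finset.range (n+1), c i * x ^ i| ≤ x ^ (n+1) / (1-x) := by
        have := gp_bound a b ha (le_of_lt hab) hb hcon n x hx
        rw [eval_gp a x n] at this
        exact this
      have hsn : Summable (fun i : ℕ => x ^ (i + (n+1))) := by
        simp_rw [pow_add]
        exact (summable_geometric_of_lt_one (le_of_lt hxpos) hx1).mul_right _
      have hnb : ∀ i : ℕ, ‖c (i+(n+1)) * x ^ (i+(n+1))‖ ≤ x ^ (i+(n+1)) := by
        intro i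
        rw [norm_mul, Real.norm_eq_abs, Real.norm_eq_abs, hc, abs_eps, one_mul,
          abs_of_pos (pow_pos hxpos _)]
      have hsn' : Summable (fun i : ℕ => ‖c (i+(n+1)) * x ^ (i+(n+1))‖) :=
        Summable.of_nonneg_of_le (fun i => norm_nonneg _) hnb hsn
      have htail : |∑' i : ℕ, c (i+(n+1)) * x ^ (i+(n+1))| ≤ x ^ (n+1) / (1-x) := by
        calc |∑' i : ℕ, c (i+(n+1)) * x ^ (i+(n+1))|
            ≤ ∑' i : ℕ, ‖c (i+(n+1)) * x ^ (i+(n+1))‖ :=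
              norm_tsum_le_tsum_norm hsn'
          _ ≤ ∑' i : ℕ, x ^ (i+(n+1)) := Summable.tsum_le_tsum hnb hsn' hsn
          _ = x ^ (n+1) / (1-x) := by
              simp_rw [pow_add]
              rw [tsum_mul_right,
                tsum_geometric_of_lt_one (le_of_lt hxpos) hx1]
              ring
      calc |∑' k, c k * x ^ k|
          = |(∑ i ∈ Finset.range (n+1), c i * x ^ i)
              + ∑' i : ℕ, c (i+(n+1)) * x ^ (i+(n+1))| := by rw [hdecomp]
        _ ≤ |∑ i ∈ Finset.range (n+1), c i * x ^ i|
              + |∑' i : ℕ, c (i+(n+1)) * x ^ (i+(n+1))| := abs_add_le _ _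
        _ ≤ x ^ (n+1) / (1-x) + x ^ (n+1) / (1-x) := add_le_add hpart htail
        _ = 2 * (x ^ (n+1) / (1-x)) := by ring
    have hlim : Filter.Tendsto (fun n : ℕ => 2 * (x ^ (n+1) / (1-x)))
        Filter.atTop (nhds 0) := by
      have h1 : Filter.Tendsto (fun n : ℕ => x ^ n) Filter.atTop (nhds 0) :=
        tendsto_pow_atTop_nhds_zero_of_lt_one (le_of_lt hxpos) hx1
      have h2 : Filter.Tendsto (fun n : ℕ => x ^ (n+1)) Filter.atTop (nhds 0) := by
        simpa [Function.comp_def] using h1.comp (Filter.tendsto_add_atTop_nat 1)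
      have h3 := h2.const_mul (2 / (1-x))
      rw [mul_zero] at h3
      have heq : (fun n : ℕ => 2 * (x^(n+1)/(1-x)))
          = fun n : ℕ => 2/(1-x) * x^(n+1) := by funext n; ring
      rw [heq]
      exact h3
    have habs : |∑' k, c k * x ^ k| ≤ 0 := ge_of_tendsto' hlim key
    exact abs_nonpos_iff.mp habs
  have hpre : IsPreconnected (Metric.ball (0:ℝ) 1) :=
    (convex_ball (0:ℝ) 1).isPreconnected
  have hm1 : a < (a+b)/2 := by linarith
  have hm2 : (a+b)/2 < b := by linarith
  have hz0 : (a+b)/2 ∈ Metric.ball (0:ℝ) 1 := by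
    rw [Metric.mem_ball, dist_zero_right, Real.norm_eq_abs,
      abs_of_pos (by linarith : (0:ℝ) < (a+b)/2)]
    linarith
  have hev : (FormalMultilinearSeries.ofScalars ℝ c).sum =ᶠ[nhds ((a+b)/2)] 0 := by
    filter_upwards [Icc_mem_nhds hm1 hm2] with y hy
    exact hzero y hy
  have heq := han.eqOn_zero_of_preconnected_of_eventuallyEq_zero hpre hz0 hev
  have h0 : (FormalMultilinearSeries.ofScalars ℝ c).sum 0 = 0 :=
    heq (Metric.mem_ball_self one_pos)
  have h1 : (FormalMultilinearSeries.ofScalars ℝ c).sum 0 = 1 := by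
    unfold FormalMultilinearSeries.sum
    have hterm : ∀ n : ℕ,
        (FormalMultilinearSeries.ofScalars ℝ c n) (fun _ => (0:ℝ)) = c n * 0^n :=
      fun n => by rw [FormalMultilinearSeries.ofScalars_apply_eq, smul_eq_mul]
    rw [tsum_congr hterm, tsum_eq_single 0 (by intro n hn; simp [zero_pow hn])]
    simp [hc, eps_zero]
  rw [h0] at h1
  norm_num at h1

lemma natDegree_pos_of_root {P : Polynomial ℝ}
    (hL : ∀ i : ℕ, i ≤ P.natDegree → P.coeff i = 1 ∨ P.coeff i = -1) {x : ℝ}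
    (hev : Polynomial.eval x P = 0) : 1 ≤ P.natDegree := by
  by_contra h
  have h0 : P.natDegree = 0 := by omega
  have hP := Polynomial.eq_C_of_natDegree_eq_zero h0
  rw [hP, Polynomial.eval_C] at hev
  rcases hL 0 (by omega) with h1 | h1 <;> rw [hev] at h1 <;> norm_num at h1

lemma ne_zero_of_root {P : Polynomial ℝ}
    (hL : ∀ i : ℕ, i ≤ P.natDegree → P.coeff i = 1 ∨ P.coeff i = -1) {x : ℝ}
    (hev : Polynomial.eval x P = 0) : x ≠ 0 := by
  intro h
  subst h
  rw [← Polynomial.coeff_zero_eq_eval_zero] at hev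
  rcases hL 0 (Nat.zero_le _) with h1 | h1 <;> rw [hev] at h1 <;> norm_num at h1

lemma abs_le_two {x : ℝ} (hx : x ∈ LSet) : |x| ≤ 2 := by
  obtain ⟨P, hL, hev⟩ := hx
  by_contra hcon
  push_neg at hcon
  have hn1 : 1 ≤ P.natDegree := natDegree_pos_of_root hL hev
  set n := P.natDegree with hn
  have heval : ∑ i ∈ Finset.range (n+1), P.coeff i * x ^ i = 0 := by
    rw [← Polynomial.eval_eq_sum_range]; exact hev
  rw [Finset.sum_range_succ] at heval
  have habsc : ∀ i, i ≤ n → |P.coeff i| = 1 := fun i hi => by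
    rcases hL i hi with h | h <;> rw [h] <;> norm_num
  have hmain : |x|^n ≤ ∑ i ∈ Finset.range n, |x|^i := by
    have h1 : |P.coeff n * x^n| = |x|^n := by
      rw [abs_mul, habsc n le_rfl, one_mul, abs_pow]
    have h2 : P.coeff n * x^n = -∑ i ∈ Finset.range n, P.coeff i * x^i := by
      linarith [heval]
    rw [h2, abs_neg] at h1
    rw [← h1]
    calc |∑ i ∈ Finset.range n, P.coeff i * x^i|
        ≤ ∑ i ∈ Finset.range n, |P.coeff i * x^i| :=
          Finset.abs_sum_le_sum_abs _ _
      _ = ∑ i ∈ Finset.range n, |x|^i := Finset.sum_congr rfl fun i hi => by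
          rw [abs_mul, habsc i (le_of_lt (Finset.mem_range.mp hi)), one_mul,
            abs_pow]
  have hy : (2:ℝ) < |x| := hcon
  have hyn : (0:ℝ) < |x|^n := pow_pos (by linarith) n
  have hgeom : ∑ i ∈ Finset.range n, |x|^i = (|x|^n - 1)/(|x| - 1) :=
    geom_sum_eq (by intro h; rw [h] at hy; norm_num at hy) n
  rw [hgeom, le_div_iff₀ (by linarith : (0:ℝ) < |x| - 1)] at hmain
  nlinarith [mul_pos hyn (show (0:ℝ) < |x| - 2 by linarith)]

lemma mem_neg {x : ℝ} (hx : x ∈ LSet) : -x ∈ LSet := by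
  obtain ⟨P, hL, hev⟩ := hx
  set n := P.natDegree with hn
  set Q : Polynomial ℝ :=
    ∑ i ∈ Finset.range (n+1), Polynomial.C ((-1)^i * P.coeff i) * Polynomial.X^i
    with hQ
  have hcoeff : ∀ k, Q.coeff k = if k < n+1 then (-1)^k * P.coeff k else 0 := by
    intro k
    rw [hQ, Polynomial.finset_sum_coeff]
    simp_rw [Polynomial.coeff_C_mul_X_pow]
    rw [Finset.sum_ite_eq (Finset.range (n+1)) k fun i => (-1)^i * P.coeff i]
    simp [Finset.mem_range]
  have hQdeg : Q.natDegree = n := by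
    apply le_antisymm
    · rw [Polynomial.natDegree_le_iff_coeff_eq_zero]
      intro N hN
      rw [hcoeff, if_neg (by omega)]
    · apply Polynomial.le_natDegree_of_ne_zero
      rw [hcoeff, if_pos (by omega)]
      exact mul_ne_zero (pow_ne_zero _ (by norm_num))
        (by rcases hL n le_rfl with h | h <;> rw [h] <;> norm_num)
  refine ⟨Q, ?_, ?_⟩
  · intro i hi
    rw [hQdeg] at hi
    rw [hcoeff, if_pos (by omega)]
    rcases Nat.even_or_odd i with he | ho
    · rw [he.neg_one_pow, one_mul]; exact hL i hi
    · rw [ho.neg_one_pow, neg_one_mul]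
      rcases hL i hi with h | h <;> rw [h]
      · right; norm_num
      · left; norm_num
  · rw [hQ, Polynomial.eval_finset_sum]
    have hterm : ∀ i ∈ Finset.range (n+1),
        Polynomial.eval (-x) (Polynomial.C ((-1)^i * P.coeff i) * Polynomial.X^i)
          = P.coeff i * x^i := by
      intro i _
      rw [Polynomial.eval_mul, Polynomial.eval_C, Polynomial.eval_pow,
        Polynomial.eval_X, neg_pow x i]
      have h11 : (-1:ℝ)^i * (-1)^i = 1 := by rw [← mul_pow]; norm_num
      calc (-1:ℝ)^i * P.coeff i * ((-1)^i * x^i)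
          = ((-1:ℝ)^i * (-1)^i) * (P.coeff i * x^i) := by ring
        _ = P.coeff i * x^i := by rw [h11, one_mul]
    rw [Finset.sum_congr rfl hterm, ← Polynomial.eval_eq_sum_range, hev]

lemma mem_inv {x : ℝ} (hx : x ∈ LSet) : x⁻¹ ∈ LSet := by
  obtain ⟨P, hL, hev⟩ := hx
  have hx0 : x ≠ 0 := ne_zero_of_root hL hev
  set n := P.natDegree with hn
  set R : Polynomial ℝ :=
    ∑ i ∈ Finset.range (n+1), Polynomial.C (P.coeff (n - i)) * Polynomial.X^i
    with hR
  have hcoeff : ∀ k, R.coeff k = if k < n+1 then P.coeff (n - k) else 0 := by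
    intro k
    rw [hR, Polynomial.finset_sum_coeff]
    simp_rw [Polynomial.coeff_C_mul_X_pow]
    rw [Finset.sum_ite_eq (Finset.range (n+1)) k fun i => P.coeff (n - i)]
    simp [Finset.mem_range]
  have hRdeg : R.natDegree = n := by
    apply le_antisymm
    · rw [Polynomial.natDegree_le_iff_coeff_eq_zero]
      intro N hN
      rw [hcoeff, if_neg (by omega)]
    · apply Polynomial.le_natDegree_of_ne_zero
      rw [hcoeff, if_pos (by omega), Nat.sub_self]
      rcases hL 0 (Nat.zero_le _) with h | h <;> rw [h] <;> norm_num
  refine ⟨R, ?_, ?_⟩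
  · intro i hi
    rw [hRdeg] at hi
    rw [hcoeff, if_pos (by omega)]
    exact hL (n - i) (Nat.sub_le n i)
  · have hmul : Polynomial.eval x⁻¹ R * x^n = 0 := by
      rw [hR, Polynomial.eval_finset_sum, Finset.sum_mul]
      have hterm : ∀ i ∈ Finset.range (n+1),
          Polynomial.eval x⁻¹ (Polynomial.C (P.coeff (n - i)) * Polynomial.X^i) * x^n
            = P.coeff (n - i) * x^(n - i) := by
        intro i hi
        have hi' : i ≤ n := Nat.lt_succ_iff.mp (Finset.mem_range.mp hi)
        rw [Polynomial.eval_mul, Polynomial.eval_C, Polynomial.eval_pow,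
          Polynomial.eval_X]
        have hxn : x^n = x^(n-i) * x^i := by
          rw [← pow_add, Nat.sub_add_cancel hi']
        have h1 : (x⁻¹)^i * x^i = 1 := by
          rw [← mul_pow, inv_mul_cancel₀ hx0, one_pow]
        calc P.coeff (n-i) * (x⁻¹)^i * x^n
            = P.coeff (n-i) * x^(n-i) * ((x⁻¹)^i * x^i) := by rw [hxn]; ring
          _ = P.coeff (n-i) * x^(n-i) := by rw [h1, mul_one]
      rw [Finset.sum_congr rfl hterm]
      have hre := Finset.sum_range_reflect (fun j => P.coeff j * x^j) (n+1)
      simp only [Nat.add_sub_cancel] at hre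
      rw [hre, ← Polynomial.eval_eq_sum_range, hev]
    rcases mul_eq_zero.mp hmul with h | h
    · exact h
    · exact absurd h (pow_ne_zero n hx0)

end LittlewoodAux

theorem closure_littlewood_real_roots :
    closure {x : ℝ | ∃ P : Polynomial ℝ,
        (∀ i : ℕ, i ≤ P.natDegree → P.coeff i = 1 ∨ P.coeff i = -1)
        ∧ Polynomial.eval x P = 0}
      = Set.Icc (-2 : ℝ) (-1 / 2) ∪ Set.Icc (1 / 2 : ℝ) 2 := by
  have hset : {x : ℝ | ∃ P : Polynomial ℝ,
      (∀ i : ℕ, i ≤ P.natDegree → P.coeff i = 1 ∨ P.coeff i = -1)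
      ∧ Polynomial.eval x P = 0} = LittlewoodAux.LSet := rfl
  rw [hset]
  apply Set.Subset.antisymm
  · apply closure_minimal
    · intro x hx
      have h2 := LittlewoodAux.abs_le_two hx
      have hx0 : x ≠ 0 := by
        obtain ⟨P, hL, hev⟩ := hx
        exact LittlewoodAux.ne_zero_of_root hL hev
      have h2' := LittlewoodAux.abs_le_two (LittlewoodAux.mem_inv hx)
      rw [abs_inv] at h2'
      have hxa : (0:ℝ) < |x| := abs_pos.mpr hx0
      have hhalf : 1/2 ≤ |x| := by
        have h1 : |x| * |x|⁻¹ = 1 := mul_inv_cancel₀ (ne_of_gt hxa)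
        nlinarith
      rcases le_or_gt 0 x with hxx | hxx
      · right
        rw [abs_of_nonneg hxx] at h2 hhalf
        exact ⟨by linarith, h2⟩
      · left
        rw [abs_of_neg hxx] at h2 hhalf
        constructor <;> [linarith; linarith]
    · exact isClosed_Icc.union isClosed_Icc
  · have hIoo1 : Set.Ioo (1/2 : ℝ) 1 ⊆ closure LittlewoodAux.LSet := by
      intro q hq
      rw [Metric.mem_closure_iff]
      intro ε hε
      obtain ⟨a, ha1, ha2⟩ := exists_between
        (show max (1/2) (q - ε) < q from max_lt hq.1 (by linarith))
      obtain ⟨b, hb1, hb2⟩ := exists_between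
        (show q < min 1 (q + ε) from lt_min hq.2 (by linarith))
      obtain ⟨x, hx, hmem⟩ := LittlewoodAux.exists_root a b
        (lt_of_le_of_lt (le_max_left _ _) ha1) (lt_trans ha2 hb1)
        (lt_of_lt_of_le hb2 (min_le_left _ _))
      refine ⟨x, hmem, ?_⟩
      rw [Real.dist_eq, abs_lt]
      have h1 := le_max_right (1/2 : ℝ) (q - ε)
      have h2 := min_le_right (1 : ℝ) (q + ε)
      constructor <;> [linarith [hx.2]; linarith [hx.1]]
    have hIcc1 : Set.Icc (1/2 : ℝ) 1 ⊆ closure LittlewoodAux.LSet := by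
      have h := closure_mono hIoo1
      rw [closure_closure, closure_Ioo (by norm_num : (1/2:ℝ) ≠ 1)] at h
      exact h
    have hIoo2 : Set.Ioo (1:ℝ) 2 ⊆ closure LittlewoodAux.LSet := by
      intro q hq
      rw [Metric.mem_closure_iff]
      intro ε hε
      have hq0 : (0:ℝ) < q := by linarith [hq.1]
      have hqq : q * q⁻¹ = 1 := mul_inv_cancel₀ (ne_of_gt hq0)
      have hqip : 0 < q⁻¹ := inv_pos.mpr hq0
      have hqi1 : q⁻¹ < 1 := by nlinarith [hq.1]
      have hqi2 : 1/2 < q⁻¹ := by nlinarith [hq.2]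
      set δ := min (ε/8) ((q⁻¹ - 1/2)/2) with hδ
      have hδ1 : δ ≤ ε/8 := min_le_left _ _
      have hδ2 : δ ≤ (q⁻¹ - 1/2)/2 := min_le_right _ _
      have hδpos : 0 < δ := lt_min (by linarith) (by linarith)
      have hclose := hIoo1 ⟨hqi2, hqi1⟩
      rw [Metric.mem_closure_iff] at hclose
      obtain ⟨x, hxmem, hxd⟩ := hclose δ hδpos
      rw [Real.dist_eq] at hxd
      have hxd' : |x - q⁻¹| < δ := by rw [abs_sub_comm]; exact hxd
      have hxlow : 1/2 < x := by
        have := abs_lt.mp hxd'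
        linarith [this.1]
      have hxpos : (0:ℝ) < x := by linarith
      have hxne : x ≠ 0 := ne_of_gt hxpos
      refine ⟨x⁻¹, LittlewoodAux.mem_inv hxmem, ?_⟩
      have key : q - x⁻¹ = (x - q⁻¹) * q / x := by
        field_simp
      rw [Real.dist_eq, key, abs_div, abs_mul]
      rw [abs_of_pos hq0, abs_of_pos hxpos]
      rw [div_lt_iff₀ hxpos]
      have hq2 : q < 2 := hq.2
      have habs : |x - q⁻¹| < δ := hxd'
      have habsnn : 0 ≤ |x - q⁻¹| := abs_nonneg _
      nlinarith
    have hIcc2 : Set.Icc (1:ℝ) 2 ⊆ closure LittlewoodAux.LSet := by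
      have h := closure_mono hIoo2
      rw [closure_closure, closure_Ioo (by norm_num : (1:ℝ) ≠ 2)] at h
      exact h
    have hpos : Set.Icc (1/2:ℝ) 2 ⊆ closure LittlewoodAux.LSet := by
      intro q hq
      rcases le_or_gt q 1 with h | h
      · exact hIcc1 ⟨hq.1, h⟩
      · exact hIcc2 ⟨le_of_lt h, hq.2⟩
    intro q hq
    rcases hq with h | h
    · have h1 : -q ∈ Set.Icc (1/2:ℝ) 2 := by
        constructor
        · have := h.2; linarith
        · have := h.1; linarith
      have h2 := hpos h1
      rw [Metric.mem_closure_iff] at h2 ⊢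
      intro ε hε
      obtain ⟨x, hxm, hxd⟩ := h2 ε hε
      refine ⟨-x, LittlewoodAux.mem_neg hxm, ?_⟩
      rw [Real.dist_eq] at hxd ⊢
      have hrw : q - -x = -(-q - x) := by ring
      rw [hrw, abs_neg]
      exact hxd
    · exact hpos h
end
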